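/- McDiarmid's inequality: Let f : X₁ × ... × X_N → ℝ satisfy the bounded-differences property with constants c₁,...,c_N (changing the k-th coordinate changes f by at most c_k). Then for independent random variables ξ₁,...,ξ_N and any ε ≥ 0, Pr(|f(ξ₁,...,ξ_N) - E[f(ξ₁,...,ξ_N)]| ≥ ε) ≤ 2·exp(-2ε²/Σ_n c_n²). -/

import Mathlib

open MeasureTheory ProbabilityTheory

section McDiarmidAux
open Real MeasureTheory ProbabilityTheory

universe u

lemma hoeff_scalar {p : ℝ} (hp0 : 0 ≤ p) (hp1 : p ≤ 1) (h : ℝ) :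
    Real.exp (-(p*h)) * (1 - p + p * Real.exp h) ≤ Real.exp (h ^ 2 / 8) := by
  have hD : ∀ x : ℝ, 0 < 1 - p + p * Real.exp x := by
    intro x
    rcases eq_or_lt_of_le hp1 with h1 | h1
    · nlinarith [Real.exp_pos x]
    · nlinarith [Real.exp_pos x, mul_nonneg hp0 (Real.exp_pos x).le]
  set D : ℝ → ℝ := fun x => 1 - p + p * Real.exp x with hDdef
  set ψ : ℝ → ℝ := fun x => x ^ 2 / 8 + p * x - Real.log (D x) with hψdef
  set ψ' : ℝ → ℝ := fun x => x / 4 + p - p * Real.exp x / D x with hψ'def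
  have hDd : ∀ x : ℝ, HasDerivAt D (p * Real.exp x) x := fun x =>
    ((Real.hasDerivAt_exp x).const_mul p).const_add (1 - p)
  have hψd : ∀ x : ℝ, HasDerivAt ψ (ψ' x) x := by
    intro x
    have h1 : HasDerivAt (fun y : ℝ => y ^ 2 / 8 + p * y)
        (x / 4 + p) x := by
      have := ((hasDerivAt_pow 2 x).div_const 8).add ((hasDerivAt_id x).const_mul p)
      refine this.congr_deriv ?_
      norm_num; ring
    have h2 : HasDerivAt (fun y => Real.log (D y)) (p * Real.exp x / D x) x :=
      (hDd x).log (hD x).ne'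
    exact h1.sub h2
  have hψ'd : ∀ x : ℝ, HasDerivAt ψ'
      (1 / 4 - p * Real.exp x * (1 - p) / (D x) ^ 2) x := by
    intro x
    have h1 : HasDerivAt (fun y : ℝ => y / 4 + p) (1 / 4) x := by
      simpa using ((hasDerivAt_id x).div_const 4).add_const p
    have h2 : HasDerivAt (fun y => p * Real.exp y / D y)
        ((p * Real.exp x * D x - p * Real.exp x * (p * Real.exp x)) / (D x) ^ 2) x :=
      ((Real.hasDerivAt_exp x).const_mul p).div (hDd x) (hD x).ne'
    refine (h1.sub h2).congr_deriv ?_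
    have := hD x
    field_simp
    ring
  have hψ'nonneg : ∀ x : ℝ, 0 ≤ 1 / 4 - p * Real.exp x * (1 - p) / (D x) ^ 2 := by
    intro x
    rw [sub_nonneg, div_le_iff₀ (pow_pos (hD x) 2)]
    have he := (Real.exp_pos x).le
    nlinarith [sq_nonneg (1 - p - p * Real.exp x), mul_nonneg hp0 he]
  have hψ'mono : Monotone ψ' := by
    apply monotone_of_deriv_nonneg (fun x => (hψ'd x).differentiableAt)
    intro x
    rw [(hψ'd x).deriv]
    exact hψ'nonneg x
  have hψ'0 : ψ' 0 = 0 := by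
    simp [hψ'def, hDdef]
  have hψ0 : ψ 0 = 0 := by simp [hψdef, hDdef]
  have hψdiff : Differentiable ℝ ψ := fun x => (hψd x).differentiableAt
  have hderiv : ∀ x, deriv ψ x = ψ' x := fun x => (hψd x).deriv
  have key : 0 ≤ ψ h := by
    rcases le_total 0 h with hh | hh
    · have hm : MonotoneOn ψ (Set.Ici 0) := by
        apply monotoneOn_of_deriv_nonneg (convex_Ici 0) hψdiff.continuous.continuousOn
          (hψdiff.differentiableOn)
        intro x hx
        rw [hderiv x, ← hψ'0]
        exact hψ'mono (le_of_lt (by simpa using hx))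
      calc (0:ℝ) = ψ 0 := hψ0.symm
        _ ≤ ψ h := hm Set.self_mem_Ici hh hh
    · have hm : AntitoneOn ψ (Set.Iic 0) := by
        apply antitoneOn_of_deriv_nonpos (convex_Iic 0) hψdiff.continuous.continuousOn
          (hψdiff.differentiableOn)
        intro x hx
        rw [hderiv x, ← hψ'0]
        exact hψ'mono (le_of_lt (by simpa using hx))
      calc (0:ℝ) = ψ 0 := hψ0.symm
        _ ≤ ψ h := hm hh Set.self_mem_Iic hh
  have hlog : Real.log (D h) ≤ h ^ 2 / 8 + p * h := by
    have := key
    simp only [hψdef] at this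
    linarith
  have hD' : D h ≤ Real.exp (h ^ 2 / 8 + p * h) :=
    (Real.log_le_iff_le_exp (hD h)).mp hlog
  show Real.exp (-(p*h)) * D h ≤ Real.exp (h ^ 2 / 8)
  calc Real.exp (-(p*h)) * D h ≤ Real.exp (-(p*h)) * Real.exp (h ^ 2 / 8 + p * h) := by
        exact mul_le_mul_of_nonneg_left hD' (Real.exp_pos _).le
    _ = Real.exp (h ^ 2 / 8) := by rw [← Real.exp_add]; ring_nf


lemma hoeffding_icc {α : Type*} [MeasurableSpace α] (ν : Measure α) [IsProbabilityMeasure ν]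
    (Y : α → ℝ) (hY : Measurable Y) (a b : ℝ) (hab : ∀ x, Y x ∈ Set.Icc a b)
    (h0 : ∫ x, Y x ∂ν = 0) (t : ℝ) :
    ∫ x, Real.exp (t * Y x) ∂ν ≤ Real.exp (t ^ 2 * (b - a) ^ 2 / 8) := by
  have hne : Nonempty α := by
    by_contra hemp
    rw [not_nonempty_iff] at hemp
    have h1 : ν Set.univ = 1 := measure_univ
    rw [Set.univ_eq_empty_iff.mpr hemp] at h1
    simp at h1
  obtain ⟨x₀⟩ := hne
  have hab0 : a ≤ b := le_trans (hab x₀).1 (hab x₀).2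
  have hM : ∀ x, |Y x| ≤ max |a| |b| := by
    intro x
    rcases hab x with ⟨h1, h2⟩
    rw [abs_le]
    constructor
    · calc -(max |a| |b|) ≤ -|a| := by simp [neg_le_neg_iff]
        _ ≤ a := neg_abs_le a
        _ ≤ Y x := h1
    · exact h2.trans ((le_abs_self b).trans (le_max_right _ _))
  have hYint : Integrable Y ν := by
    refine (integrable_const (max |a| |b|)).mono' hY.aestronglyMeasurable ?_
    exact Filter.Eventually.of_forall fun x => by simpa using hM x
  have ha0 : a ≤ 0 := by
    have h' : a ≤ ∫ x, Y x ∂ν := by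
      have := integral_mono (integrable_const a) hYint fun x => (hab x).1
      simpa using this
    linarith [h0 ▸ h']
  have hb0 : 0 ≤ b := by
    have : ∫ x, Y x ∂ν ≤ b := by
      calc ∫ x, Y x ∂ν ≤ ∫ _, b ∂ν := integral_mono hYint (integrable_const b) fun x => (hab x).2
        _ = b := by simp
    linarith [h0 ▸ this]
  rcases eq_or_lt_of_le hab0 with heq | hlt
  · -- a = b : then a = b = 0 and Y = 0
    have ha : a = 0 := le_antisymm ha0 (heq ▸ hb0)
    have hb : b = 0 := heq ▸ ha
    have : ∀ x, Y x = 0 := fun x => le_antisymm (hb ▸ (hab x).2) (ha ▸ (hab x).1)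
    simp only [this, mul_zero, Real.exp_zero, integral_const, measure_univ, ENNReal.toReal_one, probReal_univ,
      smul_eq_mul, mul_one]
    exact Real.one_le_exp (by positivity)
  · set p : ℝ := -a / (b - a) with hp
    have hba : (0:ℝ) < b - a := by linarith
    have hp0 : 0 ≤ p := div_nonneg (by linarith) hba.le
    have hp1 : p ≤ 1 := by
      rw [div_le_one hba]
      linarith
    set h : ℝ := t * (b - a) with hh
    -- pointwise bound from convexity of exp
    have hpt : ∀ x, Real.exp (t * Y x) ≤
        (b * Real.exp (t*a) - a * Real.exp (t*b)) / (b - a)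
          + Y x * ((Real.exp (t*b) - Real.exp (t*a)) / (b - a)) := by
      intro x
      rcases hab x with ⟨h1, h2⟩
      have hl : 0 ≤ (b - Y x) / (b - a) := div_nonneg (by linarith) hba.le
      have hm' : 0 ≤ (Y x - a) / (b - a) := div_nonneg (by linarith) hba.le
      have hsum : (b - Y x) / (b - a) + (Y x - a) / (b - a) = 1 := by
        field_simp
        ring
      have hcx := convexOn_exp.2 (Set.mem_univ (t*a)) (Set.mem_univ (t*b)) hl hm' hsum
      have harg : ((b - Y x) / (b - a)) • (t*a) + ((Y x - a) / (b - a)) • (t*b) = t * Y x := by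
        simp only [smul_eq_mul]
        field_simp
        ring
      rw [harg] at hcx
      calc Real.exp (t * Y x)
          ≤ ((b - Y x) / (b - a)) • Real.exp (t*a) + ((Y x - a) / (b - a)) • Real.exp (t*b) := hcx
        _ = (b * Real.exp (t*a) - a * Real.exp (t*b)) / (b - a)
            + Y x * ((Real.exp (t*b) - Real.exp (t*a)) / (b - a)) := by
            simp only [smul_eq_mul]
            field_simp
            ring
    -- integrability of LHS and RHS
    have hint1 : Integrable (fun x => Real.exp (t * Y x)) ν := by
      refine (integrable_const (Real.exp (|t| * max |a| |b|))).mono'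
        ((hY.const_mul t).exp.aestronglyMeasurable) ?_
      refine Filter.Eventually.of_forall fun x => ?_
      rw [Real.norm_eq_abs, abs_of_pos (Real.exp_pos _), Real.exp_le_exp]
      calc t * Y x ≤ |t * Y x| := le_abs_self _
        _ = |t| * |Y x| := abs_mul t (Y x)
        _ ≤ |t| * max |a| |b| := by
            exact mul_le_mul_of_nonneg_left (hM x) (abs_nonneg t)
    have hint2 : Integrable (fun x => (b * Real.exp (t*a) - a * Real.exp (t*b)) / (b - a)
          + Y x * ((Real.exp (t*b) - Real.exp (t*a)) / (b - a))) ν :=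
      (integrable_const _).add (hYint.mul_const _)
    have hIb : ∫ x, Real.exp (t * Y x) ∂ν
        ≤ (b * Real.exp (t*a) - a * Real.exp (t*b)) / (b - a) := by
      calc ∫ x, Real.exp (t * Y x) ∂ν
          ≤ ∫ x, ((b * Real.exp (t*a) - a * Real.exp (t*b)) / (b - a)
              + Y x * ((Real.exp (t*b) - Real.exp (t*a)) / (b - a))) ∂ν :=
            integral_mono hint1 hint2 hpt
        _ = (b * Real.exp (t*a) - a * Real.exp (t*b)) / (b - a)
              + (∫ x, Y x ∂ν) * ((Real.exp (t*b) - Real.exp (t*a)) / (b - a)) := by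
            rw [integral_add (integrable_const _) (hYint.mul_const _), integral_const,
              integral_mul_const]
            simp
        _ = (b * Real.exp (t*a) - a * Real.exp (t*b)) / (b - a) := by
            rw [h0]; ring
    have hkey : (b * Real.exp (t*a) - a * Real.exp (t*b)) / (b - a)
        = Real.exp (-(p*h)) * (1 - p + p * Real.exp h) := by
      have hexpb : Real.exp (t*b) = Real.exp (t*a) * Real.exp h := by
        rw [← Real.exp_add]; congr 1; ring
      have hexpa : Real.exp (-(p*h)) = Real.exp (t*a) := by
        congr 1
        rw [hp, hh]
        field_simp
      rw [hexpb, hexpa, hp]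
      field_simp
      ring
    calc ∫ x, Real.exp (t * Y x) ∂ν
        ≤ Real.exp (-(p*h)) * (1 - p + p * Real.exp h) := hkey ▸ hIb
      _ ≤ Real.exp (h ^ 2 / 8) := hoeff_scalar hp0 hp1 h
      _ = Real.exp (t ^ 2 * (b - a) ^ 2 / 8) := by rw [hh]; ring_nf

lemma hoeffding_osc {α : Type*} [MeasurableSpace α] (ν : Measure α) [IsProbabilityMeasure ν]
    (m : α → ℝ) (hm : Measurable m) (c : ℝ) (hosc : ∀ x y, m x - m y ≤ c) (t : ℝ) :
    ∫ x, Real.exp (t * m x) ∂ν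
      ≤ Real.exp (t * ∫ x, m x ∂ν + t ^ 2 * c ^ 2 / 8) := by
  have hne : Nonempty α := by
    by_contra hemp
    rw [not_nonempty_iff] at hemp
    have h1 : ν Set.univ = 1 := measure_univ
    rw [Set.univ_eq_empty_iff.mpr hemp] at h1
    simp at h1
  obtain ⟨x₀⟩ := hne
  have hc0 : 0 ≤ c := by simpa using hosc x₀ x₀
  have hmbd : ∀ x, |m x| ≤ |m x₀| + c := by
    intro x
    have h1 := hosc x x₀
    have h2 := hosc x₀ x
    rw [abs_le]
    constructor
    · linarith [neg_abs_le (m x₀)]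
    · linarith [le_abs_self (m x₀)]
  have hmint : Integrable m ν := by
    refine (integrable_const (|m x₀| + c)).mono' hm.aestronglyMeasurable ?_
    exact Filter.Eventually.of_forall fun x => by simpa using hmbd x
  set Em := ∫ x, m x ∂ν with hEm
  set Y : α → ℝ := fun x => m x - Em with hY
  have hYmeas : Measurable Y := hm.sub measurable_const
  have hY0 : ∫ x, Y x ∂ν = 0 := by
    rw [hY]
    rw [integral_sub hmint (integrable_const Em), integral_const]
    simp [hEm]
  have hbdd : BddAbove (Set.range Y) := by
    refine ⟨Y x₀ + c, ?_⟩
    rintro _ ⟨x, rfl⟩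
    have := hosc x x₀
    simp only [hY]
    linarith
  set b : ℝ := sSup (Set.range Y) with hb
  have hYle : ∀ x, Y x ≤ b := fun x => le_csSup hbdd ⟨x, rfl⟩
  have hYge : ∀ x, b - c ≤ Y x := by
    intro x
    have : b ≤ Y x + c := by
      apply csSup_le (Set.nonempty_of_mem (Set.mem_range_self x₀))
      rintro _ ⟨y, rfl⟩
      have := hosc y x
      simp only [hY]
      linarith
    linarith
  have hicc : ∀ x, Y x ∈ Set.Icc (b - c) b := fun x => ⟨hYge x, hYle x⟩
  have hmain := hoeffding_icc ν Y hYmeas (b - c) b hicc hY0 t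
  have hexp : ∀ x, Real.exp (t * m x) = Real.exp (t * Em) * Real.exp (t * Y x) := by
    intro x
    rw [← Real.exp_add]
    congr 1
    simp only [hY]
    ring
  calc ∫ x, Real.exp (t * m x) ∂ν
      = Real.exp (t * Em) * ∫ x, Real.exp (t * Y x) ∂ν := by
        simp_rw [hexp]
        rw [integral_const_mul]
    _ ≤ Real.exp (t * Em) * Real.exp (t ^ 2 * (b - (b - c)) ^ 2 / 8) := by
        exact mul_le_mul_of_nonneg_left hmain (Real.exp_pos _).le
    _ = Real.exp (t * Em + t ^ 2 * c ^ 2 / 8) := by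
        rw [← Real.exp_add]
        ring_nf

lemma insertNth_update_succAbove {n : ℕ} {α : Fin (n+1) → Type*} (p : Fin (n+1)) (x : α p)
    (f : ∀ i, α (p.succAbove i)) (j : Fin n) (y : α (p.succAbove j)) :
    p.insertNth x (Function.update f j y)
      = Function.update (p.insertNth x f) (p.succAbove j) y := by
  ext i
  cases i using p.succAboveCases with
  | x =>
    rw [Fin.insertNth_apply_same, Function.update_of_ne (Fin.succAbove_ne p j).symm,
      Fin.insertNth_apply_same]
  | p j' =>
    rw [Fin.insertNth_apply_succAbove]
    by_cases hj : j' = j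
    · subst hj
      rw [Function.update_self, Function.update_self]
    · rw [Function.update_of_ne hj,
        Function.update_of_ne (fun h => hj (Fin.succAbove_right_injective h)),
        Fin.insertNth_apply_succAbove]

lemma bdd_diff_total {N : ℕ} {X : Fin N → Type u} (f : (∀ k, X k) → ℝ) (c : Fin N → ℝ)
    (hbd : ∀ (x : ∀ k, X k) (k : Fin N) (x' : X k), |f x - f (Function.update x k x')| ≤ c k)
    (x y : ∀ k, X k) : |f x - f y| ≤ ∑ k, c k := by
  classical
  set z : ℕ → ∀ k, X k := fun i k => if (k : ℕ) < i then y k else x k with hz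
  have hz0 : z 0 = x := by
    funext k; simp [hz]
  have hzN : z N = y := by
    funext k; simp [hz, k.isLt]
  have hstep : ∀ i : Fin N, z ((i : ℕ) + 1) = Function.update (z i) i (y i) := by
    intro i
    funext k
    by_cases hk : k = i
    · subst hk
      simp [hz, Function.update_self]
    · rw [Function.update_of_ne hk]
      have hkk : (k : ℕ) ≠ (i : ℕ) := fun h => hk (Fin.ext h)
      simp only [hz]
      rcases lt_or_gt_of_ne hkk with h | h
      · rw [if_pos (h.trans (Nat.lt_succ_self i)), if_pos h]
      · rw [if_neg (by omega), if_neg (by omega)]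
  have htel : f x - f y = ∑ i : Fin N, (f (z i) - f (z ((i : ℕ) + 1))) := by
    rw [Fin.sum_univ_eq_sum_range (fun i => f (z i) - f (z (i + 1))) N,
      Finset.sum_range_sub' (fun i => f (z i)) N, hz0, hzN]
  rw [htel]
  calc |∑ i : Fin N, (f (z i) - f (z ((i : ℕ) + 1)))|
      ≤ ∑ i : Fin N, |f (z i) - f (z ((i : ℕ) + 1))| := Finset.abs_sum_le_sum_abs _ _
    _ ≤ ∑ k, c k := by
        apply Finset.sum_le_sum
        intro i _
        rw [hstep i]
        exact hbd (z i) i (y i)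

lemma c_nonneg {N : ℕ} {X : Fin N → Type u} (f : (∀ k, X k) → ℝ) (c : Fin N → ℝ)
    (hbd : ∀ (x : ∀ k, X k) (k : Fin N) (x' : X k), |f x - f (Function.update x k x')| ≤ c k)
    (x : ∀ k, X k) (k : Fin N) : 0 ≤ c k := by
  have := hbd x k (x k)
  rwa [Function.update_eq_self, sub_self, abs_zero] at this


lemma mgf_pi : ∀ (N : ℕ) (X : Fin N → Type u) (mX : ∀ k, MeasurableSpace (X k))
    (ν : ∀ k, Measure (X k)) (hν : ∀ k, IsProbabilityMeasure (ν k))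
    (f : (∀ k, X k) → ℝ) (hf : Measurable f) (c : Fin N → ℝ)
    (hbd : ∀ (x : ∀ k, X k) (k : Fin N) (x' : X k),
      |f x - f (Function.update x k x')| ≤ c k) (t : ℝ),
    ∫ x, Real.exp (t * f x) ∂(Measure.pi ν)
      ≤ Real.exp (t * ∫ x, f x ∂(Measure.pi ν) + t ^ 2 * (∑ k, c k ^ 2) / 8) := by
  intro N
  induction N with
  | zero =>
    intro X mX ν hν f hf c hbd t
    haveI := hν
    haveI : Subsingleton (∀ k : Fin 0, X k) := ⟨fun a b => funext fun k => k.elim0⟩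
    have hconst : f = fun _ => f (fun k => k.elim0) :=
      funext fun x => congrArg f (Subsingleton.elim _ _)
    rw [hconst]
    rw [integral_const, integral_const]
    simp [measure_univ]
  | succ N ih =>
    intro X mX ν hν f hf c hbd t
    haveI := hν
    classical
    -- nonemptiness and global bound on f
    have hne : ∀ k, Nonempty (X k) := by
      intro k
      by_contra h
      rw [not_nonempty_iff] at h
      have h1 : (ν k) Set.univ = 1 := measure_univ
      rw [Set.univ_eq_empty_iff.mpr h] at h1
      simp at h1
    have xstar : ∀ k, X k := fun k => (hne k).some
    set M : ℝ := |f xstar| + ∑ k, c k with hMdef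
    have hfM : ∀ x, |f x| ≤ M := by
      intro x
      have h1 := bdd_diff_total f c hbd x xstar
      have h2 := abs_sub_abs_le_abs_sub (f x) (f xstar)
      rw [hMdef]; linarith
    -- the measure-preserving splitting
    set e := MeasurableEquiv.piFinSuccAbove X 0 with he
    set ν' : ∀ j : Fin N, Measure (X ((0 : Fin (N+1)).succAbove j)) :=
      fun j => ν ((0 : Fin (N+1)).succAbove j) with hν'
    haveI : ∀ j, IsProbabilityMeasure (ν' j) := fun j => hν _
    set P' := Measure.pi ν' with hP'
    haveI : IsProbabilityMeasure P' := by rw [hP']; infer_instance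
    have hpres : MeasurePreserving e (Measure.pi ν) ((ν 0).prod P') :=
      measurePreserving_piFinSuccAbove ν 0
    set G : X 0 × (∀ j : Fin N, X ((0 : Fin (N+1)).succAbove j)) → ℝ :=
      fun z => f (Fin.insertNth 0 z.1 z.2) with hG
    have hGe : ∀ z, f (e.symm z) = G z := by
      intro z
      rw [he, hG]
      rw [MeasurableEquiv.piFinSuccAbove_symm_apply]
      rfl
    have hGmeas : Measurable G := by
      have h1 : G = fun z => f (e.symm z) := funext fun z => (hGe z).symm
      rw [h1]
      exact hf.comp e.symm.measurable
    have hGM : ∀ z, |G z| ≤ M := fun z => by rw [hG]; exact hfM _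
    -- transferring integrals to the product
    have hcomp : ∀ (g : (∀ k, X k) → ℝ),
        ∫ x, g x ∂(Measure.pi ν) = ∫ z, g (e.symm z) ∂((ν 0).prod P') := by
      intro g
      rw [← hpres.integral_comp e.measurableEmbedding (fun z => g (e.symm z))]
      exact integral_congr_ae (Filter.Eventually.of_forall fun x => by simp only [e.symm_apply_apply])
    -- integrability facts
    have hGint : Integrable G ((ν 0).prod P') := by
      refine (integrable_const M).mono' hGmeas.aestronglyMeasurable ?_
      exact Filter.Eventually.of_forall fun z => by simpa using hGM z
    have hexpGint : Integrable (fun z => Real.exp (t * G z)) ((ν 0).prod P') := by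
      refine (integrable_const (Real.exp (|t| * M))).mono'
        ((hGmeas.const_mul t).exp.aestronglyMeasurable) ?_
      refine Filter.Eventually.of_forall fun z => ?_
      rw [Real.norm_eq_abs, abs_of_pos (Real.exp_pos _), Real.exp_le_exp]
      calc t * G z ≤ |t * G z| := le_abs_self _
        _ = |t| * |G z| := abs_mul _ _
        _ ≤ |t| * M := mul_le_mul_of_nonneg_left (hGM z) (abs_nonneg t)
    -- the conditional mean
    set m : X 0 → ℝ := fun x0 => ∫ w, G (x0, w) ∂P' with hm
    have hmmeas : Measurable m := by
      rw [hm]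
      exact (hGmeas.stronglyMeasurable.integral_prod_right').measurable
    have hmM : ∀ x0, |m x0| ≤ M := by
      intro x0
      rw [hm]
      calc |∫ w, G (x0, w) ∂P'| = ‖∫ w, G (x0, w) ∂P'‖ := rfl
        _ ≤ M * ((P' Set.univ).toReal) := by
            apply norm_integral_le_of_norm_le_const
            exact Filter.Eventually.of_forall fun w => by simpa using hGM (x0, w)
        _ = M := by rw [measure_univ]; simp
    -- inner mgf bound via induction hypothesis
    have hinner : ∀ x0, ∫ w, Real.exp (t * G (x0, w)) ∂P'
        ≤ Real.exp (t * m x0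
            + t ^ 2 * (∑ j : Fin N, c ((0 : Fin (N+1)).succAbove j) ^ 2) / 8) := by
      intro x0
      refine ih (fun j => X ((0 : Fin (N+1)).succAbove j)) (fun j => mX _) ν'
        (fun j => hν _) (fun w => G (x0, w)) (hGmeas.comp measurable_prodMk_left)
        (fun j => c ((0 : Fin (N+1)).succAbove j)) ?_ t
      intro w j w'
      show |G (x0, w) - G (x0, Function.update w j w')| ≤ c ((0 : Fin (N+1)).succAbove j)
      have hupd : G (x0, Function.update w j w')
          = f (Function.update (Fin.insertNth 0 x0 w) ((0 : Fin (N+1)).succAbove j) w') := by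
        rw [hG]
        simp only
        rw [insertNth_update_succAbove]
      rw [hupd]
      exact hbd (Fin.insertNth 0 x0 w) _ w'
    -- oscillation of m
    have hosc : ∀ x0 x0', m x0 - m x0' ≤ c 0 := by
      intro x0 x0'
      have hint1 : Integrable (fun w => G (x0, w)) P' := by
        refine (integrable_const M).mono'
          ((hGmeas.comp measurable_prodMk_left).aestronglyMeasurable) ?_
        exact Filter.Eventually.of_forall fun w => by simpa using hGM (x0, w)
      have hint2 : Integrable (fun w => G (x0', w)) P' := by
        refine (integrable_const M).mono'
          ((hGmeas.comp measurable_prodMk_left).aestronglyMeasurable) ?_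
        exact Filter.Eventually.of_forall fun w => by simpa using hGM (x0', w)
      have hpt : ∀ w, G (x0, w) - G (x0', w) ≤ c 0 := by
        intro w
        have h1 : G (x0', w) = f (Function.update (Fin.insertNth 0 x0 w) 0 x0') := by
          rw [hG]
          simp only
          rw [Fin.update_insertNth]
        calc G (x0, w) - G (x0', w) ≤ |G (x0, w) - G (x0', w)| := le_abs_self _
          _ ≤ c 0 := by rw [h1]; exact hbd (Fin.insertNth 0 x0 w) 0 x0'
      have : m x0 - m x0' = ∫ w, (G (x0, w) - G (x0', w)) ∂P' := by
        rw [hm]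
        simp only
        rw [integral_sub hint1 hint2]
      rw [this]
      calc ∫ w, (G (x0, w) - G (x0', w)) ∂P' ≤ ∫ _, c 0 ∂P' :=
            integral_mono (hint1.sub hint2) (integrable_const _) hpt
        _ = c 0 := by rw [integral_const, probReal_univ]; simp
    -- Fubini
    have hfub1 : ∫ z, Real.exp (t * G z) ∂((ν 0).prod P')
        = ∫ x0, ∫ w, Real.exp (t * G (x0, w)) ∂P' ∂(ν 0) :=
      integral_prod _ hexpGint
    have hfub2 : ∫ z, G z ∂((ν 0).prod P') = ∫ x0, m x0 ∂(ν 0) :=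
      integral_prod _ hGint
    -- outer integrability
    set C' : ℝ := t ^ 2 * (∑ j : Fin N, c ((0 : Fin (N+1)).succAbove j) ^ 2) / 8 with hC'
    have hC'0 : 0 ≤ C' := by
      rw [hC']
      have : 0 ≤ ∑ j : Fin N, c ((0 : Fin (N+1)).succAbove j) ^ 2 :=
        Finset.sum_nonneg fun j _ => sq_nonneg _
      positivity
    have hout1 : Integrable (fun x0 => ∫ w, Real.exp (t * G (x0, w)) ∂P') (ν 0) := by
      refine (integrable_const (Real.exp (|t| * M))).mono'
        ((((hGmeas.const_mul t).exp.stronglyMeasurable).integral_prod_right').aestronglyMeasurable) ?_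
      refine Filter.Eventually.of_forall fun x0 => ?_
      rw [Real.norm_eq_abs]
      calc |∫ w, Real.exp (t * G (x0, w)) ∂P'| = ‖∫ w, Real.exp (t * G (x0, w)) ∂P'‖ := rfl
        _ ≤ Real.exp (|t| * M) * ((P' Set.univ).toReal) := by
            apply norm_integral_le_of_norm_le_const
            refine Filter.Eventually.of_forall fun w => ?_
            rw [Real.norm_eq_abs, abs_of_pos (Real.exp_pos _), Real.exp_le_exp]
            calc t * G (x0, w) ≤ |t * G (x0, w)| := le_abs_self _
              _ = |t| * |G (x0, w)| := abs_mul _ _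
              _ ≤ |t| * M := mul_le_mul_of_nonneg_left (hGM _) (abs_nonneg t)
        _ = Real.exp (|t| * M) := by rw [measure_univ]; simp
    have hout2 : Integrable (fun x0 => Real.exp (t * m x0 + C')) (ν 0) := by
      refine (integrable_const (Real.exp (|t| * M + C'))).mono'
        (((hmmeas.const_mul t).add_const C').exp.aestronglyMeasurable) ?_
      refine Filter.Eventually.of_forall fun x0 => ?_
      rw [Real.norm_eq_abs, abs_of_pos (Real.exp_pos _), Real.exp_le_exp]
      have : t * m x0 ≤ |t| * M := by
        calc t * m x0 ≤ |t * m x0| := le_abs_self _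
          _ = |t| * |m x0| := abs_mul _ _
          _ ≤ |t| * M := mul_le_mul_of_nonneg_left (hmM _) (abs_nonneg t)
      linarith
    -- assembling
    have hsum : (∑ k : Fin (N+1), c k ^ 2)
        = c 0 ^ 2 + ∑ j : Fin N, c ((0 : Fin (N+1)).succAbove j) ^ 2 :=
      Fin.sum_univ_succAbove (fun k => c k ^ 2) 0
    have hEf : ∫ x, f x ∂(Measure.pi ν) = ∫ x0, m x0 ∂(ν 0) := by
      rw [hcomp f]
      simp_rw [hGe]
      exact hfub2
    calc ∫ x, Real.exp (t * f x) ∂(Measure.pi ν)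
        = ∫ z, Real.exp (t * G z) ∂((ν 0).prod P') := by
          rw [hcomp (fun x => Real.exp (t * f x))]
          simp_rw [hGe]
      _ = ∫ x0, ∫ w, Real.exp (t * G (x0, w)) ∂P' ∂(ν 0) := hfub1
      _ ≤ ∫ x0, Real.exp (t * m x0 + C') ∂(ν 0) :=
          integral_mono hout1 hout2 fun x0 => hinner x0
      _ = Real.exp C' * ∫ x0, Real.exp (t * m x0) ∂(ν 0) := by
          simp_rw [Real.exp_add]
          rw [integral_mul_const]
          ring
      _ ≤ Real.exp C' * Real.exp (t * (∫ x0, m x0 ∂(ν 0)) + t ^ 2 * (c 0) ^ 2 / 8) := by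
          exact mul_le_mul_of_nonneg_left (hoeffding_osc (ν 0) m hmmeas (c 0) hosc t)
            (Real.exp_pos _).le
      _ = Real.exp (t * ∫ x, f x ∂(Measure.pi ν)
            + t ^ 2 * (∑ k : Fin (N+1), c k ^ 2) / 8) := by
          rw [← Real.exp_add, hEf, hsum, hC']
          congr 1
          ring



end McDiarmidAux

open Real ProbabilityTheory in
/-- McDiarmid's inequality: a function with bounded differences concentrates around
its mean for independent random variables. -/
theorem mcdiarmid_inequality {N : ℕ} {X : Fin N → Type*}
    [mX : ∀ k, MeasurableSpace (X k)]
    {Ω : Type*} [MeasurableSpace Ω] (μ : Measure Ω) [IsProbabilityMeasure μ]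
    (ξ : (k : Fin N) → Ω → X k) (hmeas : ∀ k, Measurable (ξ k))
    (hind : iIndepFun ξ μ)
    (f : ((k : Fin N) → X k) → ℝ) (hf : Measurable f)
    (c : Fin N → ℝ)
    (hbd : ∀ (x : (k : Fin N) → X k) (k : Fin N) (x' : X k),
      |f x - f (Function.update x k x')| ≤ c k)
    (ε : ℝ) (hε : 0 ≤ ε) :
    (μ {ω | ε ≤ |f (fun k => ξ k ω) - ∫ ω', f (fun k => ξ k ω') ∂μ|}).toReal
      ≤ 2 * Real.exp (-2 * ε ^ 2 / ∑ k, (c k) ^ 2) := by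
  classical
  set S : ℝ := ∑ k, (c k) ^ 2 with hSdef
  have hS0 : 0 ≤ S := Finset.sum_nonneg fun k _ => sq_nonneg _
  set F : Ω → ∀ k, X k := fun ω k => ξ k ω with hF
  have hFmeas : Measurable F := measurable_pi_iff.mpr hmeas
  set Z : Ω → ℝ := fun ω => f (F ω) with hZ
  have hZmeas : Measurable Z := hf.comp hFmeas
  set EZ : ℝ := ∫ ω', f (fun k => ξ k ω') ∂μ with hEZ
  set A : Set Ω := {ω | ε ≤ |Z ω - EZ|} with hA
  show (μ A).toReal ≤ 2 * Real.exp (-2 * ε ^ 2 / S)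
  rcases eq_or_lt_of_le hS0 with hS | hS
  · -- degenerate case
    calc (μ A).toReal ≤ (μ Set.univ).toReal :=
          ENNReal.toReal_mono (measure_ne_top μ _) (measure_mono (Set.subset_univ _))
      _ = 1 := by rw [measure_univ]; rfl
      _ ≤ 2 * Real.exp (-2 * ε ^ 2 / S) := by
          rw [← hS, div_zero, Real.exp_zero]
          norm_num
  · -- main case
    haveI hPMk : ∀ k, IsProbabilityMeasure (μ.map (ξ k)) :=
      fun k => Measure.isProbabilityMeasure_map (hmeas k).aemeasurable
    set P : Measure (∀ k, X k) := Measure.pi (fun k => μ.map (ξ k)) with hP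
    haveI : IsProbabilityMeasure P := by rw [hP]; infer_instance
    have hmap : P = μ.map F := by
      rw [hP]
      apply Measure.pi_eq
      intro s hs
      rw [Measure.map_apply hFmeas (MeasurableSet.univ_pi hs)]
      have hpre : F ⁻¹' Set.univ.pi s = ⋂ k, ξ k ⁻¹' s k := by
        ext ω
        simp [hF, Set.mem_pi]
      rw [hpre]
      have h2 := (ProbabilityTheory.iIndepFun_iff_measure_inter_preimage_eq_mul.mp hind)
        Finset.univ (sets := s) (fun k _ => hs k)
      simp only [Finset.mem_univ, Set.iInter_true, Set.biInter_univ] at h2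
      rw [h2]
      congr 1
      funext k
      rw [Measure.map_apply (hmeas k) (hs k)]
    have htrans : ∀ (g : (∀ k, X k) → ℝ), Measurable g →
        ∫ x, g x ∂P = ∫ ω, g (F ω) ∂μ := by
      intro g hg
      rw [hmap]
      exact integral_map hFmeas.aemeasurable
        (hg.aestronglyMeasurable)
    -- global bound on f
    have hΩne : Nonempty Ω := by
      by_contra h
      rw [not_nonempty_iff] at h
      have h1 : μ Set.univ = 1 := measure_univ
      rw [Set.univ_eq_empty_iff.mpr h] at h1
      simp at h1
    obtain ⟨ω₀⟩ := hΩne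
    set xstar : ∀ k, X k := fun k => ξ k ω₀ with hxstar
    set M : ℝ := |f xstar| + ∑ k, c k with hM
    have hfM : ∀ x, |f x| ≤ M := by
      intro x
      have h1 := bdd_diff_total f c hbd x xstar
      have h2 := abs_sub_abs_le_abs_sub (f x) (f xstar)
      rw [hM]; linarith
    have hfintP : Integrable f P := by
      refine (integrable_const M).mono' hf.aestronglyMeasurable ?_
      exact Filter.Eventually.of_forall fun x => by simpa using hfM x
    have hEP : ∫ x, f x ∂P = EZ := htrans f hf
    -- mgf bound at P level, one lemma for each sign
    have hmgfP : ∀ (g : (∀ k, X k) → ℝ), Measurable g →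
        (∀ (x : ∀ k, X k) (k : Fin N) (x' : X k),
          |g x - g (Function.update x k x')| ≤ c k) →
        (∫ x, g x ∂P = 0) → ∀ t : ℝ,
        ∫ ω, Real.exp (t * g (F ω)) ∂μ ≤ Real.exp (t ^ 2 * S / 8) := by
      intro g hg hgbd hg0 t
      rw [← htrans (fun x => Real.exp (t * g x)) ((hg.const_mul t).exp)]
      calc ∫ x, Real.exp (t * g x) ∂P
          ≤ Real.exp (t * ∫ x, g x ∂P + t ^ 2 * (∑ k, c k ^ 2) / 8) :=
            mgf_pi N X mX (fun k => μ.map (ξ k)) hPMk g hg c hgbd t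
        _ = Real.exp (t ^ 2 * S / 8) := by rw [hg0, hSdef]; ring_nf
    set t : ℝ := 4 * ε / S with ht
    have ht0 : 0 ≤ t := by positivity
    have hexpo : -t * ε + t ^ 2 * S / 8 = -2 * ε ^ 2 / S := by
      rw [ht]
      field_simp
      ring
    -- integrability for Chernoff
    have hintc : ∀ (Y : Ω → ℝ), Measurable Y → (∀ ω, |Y ω| ≤ M + |EZ|) →
        Integrable (fun ω => Real.exp (t * Y ω)) μ := by
      intro Y hY hYb
      refine (integrable_const (Real.exp (|t| * (M + |EZ|)))).mono'
        ((hY.const_mul t).exp.aestronglyMeasurable) ?_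
      refine Filter.Eventually.of_forall fun ω => ?_
      rw [Real.norm_eq_abs, abs_of_pos (Real.exp_pos _), Real.exp_le_exp]
      calc t * Y ω ≤ |t * Y ω| := le_abs_self _
        _ = |t| * |Y ω| := abs_mul _ _
        _ ≤ |t| * (M + |EZ|) := mul_le_mul_of_nonneg_left (hYb ω) (abs_nonneg t)
    have hZb : ∀ ω, |Z ω - EZ| ≤ M + |EZ| := fun ω =>
      (abs_sub _ _).trans (by linarith [hfM (F ω)])
    -- tail 1
    have htail1 : (μ {ω | ε ≤ Z ω - EZ}).toReal ≤ Real.exp (-2 * ε ^ 2 / S) := by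
      have hint := hintc (fun ω => Z ω - EZ) (hZmeas.sub measurable_const) hZb
      have hcher := measure_ge_le_exp_mul_mgf (X := fun ω => Z ω - EZ) (μ := μ) ε ht0 hint
      have hg0 : ∫ x, (f x - EZ) ∂P = 0 := by
        rw [integral_sub hfintP (integrable_const _), hEP, integral_const]
        simp
      have hmgf := hmgfP (fun x => f x - EZ) (hf.sub measurable_const)
        (fun x k x' => by simpa using hbd x k x') hg0 t
      have hmgle : mgf (fun ω => Z ω - EZ) μ t ≤ Real.exp (t ^ 2 * S / 8) := by
        rw [mgf]
        exact hmgf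
      calc (μ {ω | ε ≤ Z ω - EZ}).toReal
          ≤ Real.exp (-t * ε) * mgf (fun ω => Z ω - EZ) μ t := hcher
        _ ≤ Real.exp (-t * ε) * Real.exp (t ^ 2 * S / 8) :=
            mul_le_mul_of_nonneg_left hmgle (Real.exp_pos _).le
        _ = Real.exp (-2 * ε ^ 2 / S) := by rw [← Real.exp_add, hexpo]
    -- tail 2
    have htail2 : (μ {ω | ε ≤ EZ - Z ω}).toReal ≤ Real.exp (-2 * ε ^ 2 / S) := by
      have hint := hintc (fun ω => EZ - Z ω) (measurable_const.sub hZmeas)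
        (fun ω => by rw [abs_sub_comm]; exact hZb ω)
      have hcher := measure_ge_le_exp_mul_mgf (X := fun ω => EZ - Z ω) (μ := μ) ε ht0 hint
      have hg0 : ∫ x, (EZ - f x) ∂P = 0 := by
        rw [integral_sub (integrable_const _) hfintP, hEP, integral_const]
        simp
      have hmgf := hmgfP (fun x => EZ - f x) (measurable_const.sub hf)
        (fun x k x' => by
          have := hbd x k x'
          rw [abs_sub_comm] at this
          simpa using this) hg0 t
      have hmgle : mgf (fun ω => EZ - Z ω) μ t ≤ Real.exp (t ^ 2 * S / 8) := by
        rw [mgf]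
        exact hmgf
      calc (μ {ω | ε ≤ EZ - Z ω}).toReal
          ≤ Real.exp (-t * ε) * mgf (fun ω => EZ - Z ω) μ t := hcher
        _ ≤ Real.exp (-t * ε) * Real.exp (t ^ 2 * S / 8) :=
            mul_le_mul_of_nonneg_left hmgle (Real.exp_pos _).le
        _ = Real.exp (-2 * ε ^ 2 / S) := by rw [← Real.exp_add, hexpo]
    -- union bound
    have hsub : A ⊆ {ω | ε ≤ Z ω - EZ} ∪ {ω | ε ≤ EZ - Z ω} := by
      intro ω hω
      have hω' : ε ≤ |Z ω - EZ| := hω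
      rcases le_abs.mp hω' with h | h
      · exact Or.inl h
      · exact Or.inr (by simpa [neg_sub] using h)
    have hle : μ A ≤ μ {ω | ε ≤ Z ω - EZ} + μ {ω | ε ≤ EZ - Z ω} :=
      (measure_mono hsub).trans (measure_union_le _ _)
    calc (μ A).toReal
        ≤ (μ {ω | ε ≤ Z ω - EZ} + μ {ω | ε ≤ EZ - Z ω}).toReal :=
          ENNReal.toReal_mono
            (ENNReal.add_ne_top.mpr ⟨measure_ne_top μ _, measure_ne_top μ _⟩) hle
      _ = (μ {ω | ε ≤ Z ω - EZ}).toReal + (μ {ω | ε ≤ EZ - Z ω}).toReal :=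
          ENNReal.toReal_add (measure_ne_top μ _) (measure_ne_top μ _)
      _ ≤ Real.exp (-2 * ε ^ 2 / S) + Real.exp (-2 * ε ^ 2 / S) := add_le_add htail1 htail2
      _ = 2 * Real.exp (-2 * ε ^ 2 / S) := by ring
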